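/- Let S* = {x : G(x) = 0}, let x̄ ∈ S*, and suppose ∇f is L_H-Lipschitz on ℝⁿ and ∇²f is L_C-Lipschitz on B(x̄, ε₀). Let x_k ∈ B(x̄, ε₀/2), let H_k = ∇²f(x_k) + ([−λ_min(∇²f(x_k))]₊ + c + μ₁·min{1, ‖G(x_k)‖^δ})·I, and let x̂_k minimize x ↦ f(x_k) + ⟨∇f(x_k), x − x_k⟩ + g(x) + (1/2)⟨x − x_k, H_k(x − x_k)⟩ + ⟨ε_k, x − x_k⟩ with ‖ε_k‖ ≤ (μ₂/2)·min{1, ‖G(x_k)‖^δ}·‖x̂_k − x_k‖, where c > μ₂(1 + 2L_H + μ₁)/(2 − μ₂), μ₁ ∈ (0,1], μ₂ ∈ (0, μ₁], δ ∈ [0,1]. Then with η̃̃ = 2c − μ₂(c + 1 + μ₁ + 2L_H) > 0, ‖x̂_k − x_k‖ ≤ (L_C/η̃̃)·dist(x_k, S*)² + (2(L_H + 2c + μ₁)/η̃̃)·dist(x_k, S*). -/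

import Mathlib

open scoped RealInnerProductSpace

lemma small_eps {A C β : ℝ} (hβ : 0 < β) (h : ∀ ε ∈ Set.Ioo (0:ℝ) β, A ≤ ε * C) : A ≤ 0 := by
  by_contra hA
  push_neg at hA
  rcases le_or_gt C 0 with hC | hC
  · have h1 := h (β/2) ⟨by linarith, by linarith⟩
    nlinarith
  · have hε : 0 < min (β/2) (A/(2*C)) := lt_min (by linarith) (by positivity)
    have h2 : min (β/2) (A/(2*C)) < β := lt_of_le_of_lt (min_le_left _ _) (by linarith)
    have h3 := h _ ⟨hε, h2⟩
    have h4 : min (β/2) (A/(2*C)) * C ≤ (A/(2*C)) * C :=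
      mul_le_mul_of_nonneg_right (min_le_right _ _) hC.le
    have h5 : (A/(2*C)) * C = A/2 := by field_simp
    linarith

lemma subgrad_step {E : Type*} [NormedAddCommGroup E] [InnerProductSpace ℝ E] {g : E → ℝ}
    (hg : ConvexOn ℝ Set.univ g) {q : E → ℝ}
    {x₀ y : E} {L : ℝ} (C : ℝ)
    (hmin : ∀ u, g x₀ + q x₀ ≤ g u + q u)
    (hq : ∀ t ∈ Set.Ioo (0:ℝ) 1, q (x₀ + t • (y - x₀)) ≤ q x₀ + t * L + t^2 * C) :
    g x₀ ≤ g y + L := by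
  have key : ∀ t ∈ Set.Ioo (0:ℝ) 1, g x₀ - g y - L ≤ t * C := by
    intro t ht
    have h1 := hmin (x₀ + t • (y - x₀))
    have h2 := hq t ht
    have hconv := hg.2 (Set.mem_univ x₀) (Set.mem_univ y)
      (by linarith [ht.2] : (0:ℝ) ≤ 1 - t) ht.1.le (by ring)
    have heq : x₀ + t • (y - x₀) = (1-t) • x₀ + t • y := by
      rw [smul_sub, sub_smul, one_smul]; abel
    rw [heq] at h1 h2
    simp only [smul_eq_mul] at hconv
    have h6 : t * (g x₀ - g y - L) ≤ t * (t * C) := by nlinarith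
    have := le_of_mul_le_mul_left h6 ht.1
    linarith
  linarith [small_eps one_pos key]

/-- subgradient inequality at a stationary point -/
lemma stationary_subgrad {E : Type*} [NormedAddCommGroup E] [InnerProductSpace ℝ E] {g : E → ℝ}
    (hg : ConvexOn ℝ Set.univ g) (xstar b : E)
    (hm : ∀ u, g xstar + (1/2) * ‖xstar - (xstar - b)‖^2 ≤ g u + (1/2) * ‖u - (xstar - b)‖^2) :
    ∀ y, g xstar ≤ g y + ⟪b, y - xstar⟫ := by
  intro y
  refine subgrad_step hg (q := fun u' => (1/2) * ‖u' - (xstar - b)‖^2)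
    ((1/2) * ‖y - xstar‖^2) hm (fun t ht => ?_)
  have hv : xstar + t • (y - xstar) - (xstar - b) = b + t • (y - xstar) := by abel
  have hv0 : xstar - (xstar - b) = b := by abel
  rw [hv, hv0, norm_add_sq_real, real_inner_smul_right, norm_smul, Real.norm_eq_abs, mul_pow,
    sq_abs]
  nlinarith [sq_nonneg t]

/-- subgradient inequality for the quadratic model minimizer -/
lemma model_subgrad {E : Type*} [NormedAddCommGroup E] [InnerProductSpace ℝ E] {g : E → ℝ}
    (hg : ConvexOn ℝ Set.univ g) (H : E →L[ℝ] E) (f0 : ℝ) (b εk xk xhat y : E)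
    (hmin : ∀ u, f0 + ⟪b, xhat - xk⟫ + g xhat
        + (1/2) * ⟪xhat - xk, H (xhat - xk)⟫ + ⟪εk, xhat - xk⟫
        ≤ f0 + ⟪b, u - xk⟫ + g u + (1/2) * ⟪u - xk, H (u - xk)⟫ + ⟪εk, u - xk⟫) :
    g xhat ≤ g y + (⟪b, y - xhat⟫
      + (1/2)*(⟪y - xhat, H (xhat - xk)⟫ + ⟪xhat - xk, H (y - xhat)⟫) + ⟪εk, y - xhat⟫) := by
  refine subgrad_step hg
    (q := fun u' => f0 + ⟪b, u' - xk⟫ + (1/2) * ⟪u' - xk, H (u' - xk)⟫ + ⟪εk, u' - xk⟫)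
    ((1/2) * (‖H‖ * ‖y - xhat‖^2)) (fun u' => by linarith [hmin u'])
    (fun t ht => ?_)
  set d := xhat - xk with hddef
  have hv : xhat + t • (y - xhat) - xk = d + t • (y - xhat) := by rw [hddef]; abel
  rw [hv]
  set v := y - xhat with hvdef
  have e1 : ⟪b, d + t • v⟫ = ⟪b, d⟫ + t * ⟪b, v⟫ := by
    rw [inner_add_right, real_inner_smul_right]
  have e2 : ⟪εk, d + t • v⟫ = ⟪εk, d⟫ + t * ⟪εk, v⟫ := by
    rw [inner_add_right, real_inner_smul_right]
  have e3 : H (d + t • v) = H d + t • H v := by rw [map_add, map_smul]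
  have e4 : ⟪d + t • v, H d + t • H v⟫
      = ⟪d, H d⟫ + t * ⟪d, H v⟫ + t * ⟪v, H d⟫ + t^2 * ⟪v, H v⟫ := by
    rw [inner_add_left, inner_add_right, inner_add_right, real_inner_smul_left,
      real_inner_smul_right, real_inner_smul_left, real_inner_smul_right]
    ring
  have e5 : ⟪v, H v⟫ ≤ ‖H‖ * ‖v‖^2 := by
    calc ⟪v, H v⟫ ≤ ‖v‖ * ‖H v‖ := real_inner_le_norm _ _
      _ ≤ ‖v‖ * (‖H‖ * ‖v‖) := mul_le_mul_of_nonneg_left (H.le_opNorm v) (norm_nonneg v)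
      _ = ‖H‖ * ‖v‖^2 := by ring
  have e6 : t^2 * ⟪v, H v⟫ ≤ t^2 * (‖H‖ * ‖v‖^2) :=
    mul_le_mul_of_nonneg_left e5 (sq_nonneg t)
  rw [e1, e2, e3, e4]
  linarith [e6]


lemma hess_symm {E : Type*} [NormedAddCommGroup E] [InnerProductSpace ℝ E] [CompleteSpace E]
    (f : E → ℝ) (hf : ContDiff ℝ 2 f)
    (Hess : E → (E →L[ℝ] E)) (hHess : ∀ y, HasFDerivAt (gradient f) (Hess y) y) (xk : E) :
    ∀ v w, ⟪Hess xk v, w⟫ = ⟪Hess xk w, v⟫ := by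
  set T := ((InnerProductSpace.toDual ℝ E).toContinuousLinearEquiv :
    E ≃L[ℝ] _).toContinuousLinearMap with hT
  have hd1 : ∀ y, HasFDerivAt f (T (gradient f y)) y := by
    intro y
    have hdf : DifferentiableAt ℝ f y := (hf.differentiable (by norm_num)).differentiableAt
    have h2 : T (gradient f y) = fderiv ℝ f y := by
      rw [hT, gradient]; simp
    rw [h2]; exact hdf.hasFDerivAt
  have hd2 : HasFDerivAt (fun y => T (gradient f y)) (T.comp (Hess xk)) xk :=
    T.hasFDerivAt.comp xk (hHess xk)
  have hs := second_derivative_symmetric hd1 hd2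
  intro v w
  have h := hs v w
  simp only [ContinuousLinearMap.comp_apply, hT] at h
  simpa [InnerProductSpace.toDual_apply_apply] using h

lemma taylor_bound {E : Type*} [NormedAddCommGroup E] [InnerProductSpace ℝ E] [CompleteSpace E]
    (f : E → ℝ) (hf : ContDiff ℝ 2 f)
    (Hess : E → (E →L[ℝ] E)) (hHess : ∀ y, HasFDerivAt (gradient f) (Hess y) y)
    (xbar : E) (ε₀ LC : ℝ) (hLC : 0 ≤ LC)
    (hLipC : ∀ u ∈ Metric.ball xbar ε₀, ∀ v ∈ Metric.ball xbar ε₀,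
        ‖Hess u - Hess v‖ ≤ LC * ‖u - v‖)
    (xk : E) (hxk : dist xk xbar < ε₀ / 2)
    (xstar : E) (hcl : ‖xstar - xk‖ < ε₀ / 2) :
    ‖gradient f xstar - gradient f xk - Hess xk (xstar - xk)‖ ≤ LC / 2 * ‖xstar - xk‖ ^ 2 := by
  set e := xstar - xk with hedef
  have hmem : ∀ t ∈ Set.Icc (0:ℝ) 1, xk + t • e ∈ Metric.ball xbar ε₀ := by
    intro t ht
    rw [Metric.mem_ball, dist_eq_norm]
    have h1 : ‖xk + t • e - xbar‖ ≤ ‖xk - xbar‖ + ‖t • e‖ := by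
      have : xk + t • e - xbar = (xk - xbar) + t • e := by abel
      rw [this]; exact norm_add_le _ _
    have h2 : ‖t • e‖ = |t| * ‖e‖ := by rw [norm_smul, Real.norm_eq_abs]
    have h3 : |t| ≤ 1 := abs_le.mpr ⟨by linarith [ht.1], ht.2⟩
    have h4 : ‖xk - xbar‖ = dist xk xbar := (dist_eq_norm _ _).symm
    nlinarith [abs_nonneg t, norm_nonneg e]
  have hγ : ∀ t : ℝ, HasDerivAt (fun t : ℝ => xk + t • e) e t := by
    intro t
    simpa using ((hasDerivAt_id t).smul_const e).const_add xk
  have hh : ∀ t : ℝ, HasDerivAt (fun t => gradient f (xk + t • e) - t • Hess xk e)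
      (Hess (xk + t • e) e - Hess xk e) t := by
    intro t
    have h1 : HasDerivAt (fun t : ℝ => gradient f (xk + t • e)) (Hess (xk + t • e) e) t :=
      by have := (hHess (xk + t • e)).comp_hasDerivAt t (hγ t); exact this
    have h2 : HasDerivAt (fun t : ℝ => t • Hess xk e) (Hess xk e) t := by
      simpa using (hasDerivAt_id t).smul_const (Hess xk e)
    exact h1.sub h2
  have hgradC : ContDiff ℝ 1 (gradient f) := by
    have h1 : ContDiff ℝ 1 (fderiv ℝ f) := hf.fderiv_right (by norm_num)
    have h2 : gradient f = fun x => (InnerProductSpace.toDual ℝ E).symm (fderiv ℝ f x) := by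
      funext x; rw [gradient]
    rw [h2]
    exact (InnerProductSpace.toDual ℝ E).symm.contDiff.comp h1
  have hHeq : ∀ y, Hess y = fderiv ℝ (gradient f) y := fun y => ((hHess y).fderiv).symm
  have hcont : Continuous fun t : ℝ => Hess (xk + t • e) e - Hess xk e := by
    have h1 : Continuous (fderiv ℝ (gradient f)) := hgradC.continuous_fderiv (by norm_num)
    have h2 : Continuous fun t : ℝ => xk + t • e :=
      continuous_const.add (continuous_id.smul continuous_const)
    have h3 : Continuous fun t : ℝ => Hess (xk + t • e) := by
      simp only [hHeq]; exact h1.comp h2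
    exact (h3.clm_apply continuous_const).sub continuous_const
  have hint := intervalIntegral.integral_eq_sub_of_hasDerivAt (f := fun t =>
      gradient f (xk + t • e) - t • Hess xk e) (a := 0) (b := 1)
      (fun t _ => hh t) ((hcont.intervalIntegrable 0 1))
  have hbound : ‖∫ t in (0:ℝ)..1, (Hess (xk + t • e) e - Hess xk e)‖
      ≤ |∫ t in (0:ℝ)..1, LC * ‖e‖ ^ 2 * t| := by
    apply intervalIntegral.norm_integral_le_abs_of_norm_le
    · have hIoc : Set.uIoc (0:ℝ) 1 = Set.Ioc (0:ℝ) 1 := Set.uIoc_of_le (by norm_num)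
      filter_upwards [MeasureTheory.ae_restrict_mem measurableSet_uIoc] with t ht
      rw [hIoc] at ht
      have hsub : Hess (xk + t • e) e - Hess xk e = (Hess (xk + t • e) - Hess xk) e := by
        simp [ContinuousLinearMap.sub_apply]
      rw [hsub]
      have h1 : ‖(Hess (xk + t • e) - Hess xk) e‖ ≤ ‖Hess (xk + t • e) - Hess xk‖ * ‖e‖ :=
        ContinuousLinearMap.le_opNorm _ _
      have h2 : ‖Hess (xk + t • e) - Hess xk‖ ≤ LC * ‖xk + t • e - xk‖ := by
        apply hLipC _ (hmem t ⟨ht.1.le, ht.2⟩) _ _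
        rw [Metric.mem_ball]
        have : (0:ℝ) ≤ ‖e‖ := norm_nonneg e
        linarith [hcl]
      have h3 : ‖xk + t • e - xk‖ = t * ‖e‖ := by
        have h4 : xk + t • e - xk = t • e := by abel
        rw [h4, norm_smul, Real.norm_eq_abs, abs_of_pos ht.1]
      rw [h3] at h2
      calc ‖(Hess (xk + t • e) - Hess xk) e‖
          ≤ ‖Hess (xk + t • e) - Hess xk‖ * ‖e‖ := h1
        _ ≤ LC * (t * ‖e‖) * ‖e‖ := by
            nlinarith [norm_nonneg e, norm_nonneg (Hess (xk + t • e) - Hess xk)]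
        _ = LC * ‖e‖ ^ 2 * t := by ring
    · exact (continuous_const.mul continuous_id).intervalIntegrable 0 1
  have heval : ∫ t in (0:ℝ)..1, LC * ‖e‖ ^ 2 * t = LC * ‖e‖ ^ 2 * (1 / 2) := by
    rw [intervalIntegral.integral_const_mul, integral_id]; norm_num
  rw [hint] at hbound
  have heq2 : gradient f (xk + (1:ℝ) • e) - (1:ℝ) • Hess xk e
      - (gradient f (xk + (0:ℝ) • e) - (0:ℝ) • Hess xk e)
      = gradient f xstar - gradient f xk - Hess xk e := by
    have h1 : xk + (1:ℝ) • e = xstar := by rw [one_smul, hedef]; abel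
    have h0 : xk + (0:ℝ) • e = xk := by rw [zero_smul, add_zero]
    rw [h1, h0, one_smul, zero_smul]; abel
  rw [heq2, heval] at hbound
  calc ‖gradient f xstar - gradient f xk - Hess xk e‖
      ≤ |LC * ‖e‖ ^ 2 * (1/2)| := hbound
    _ = LC / 2 * ‖e‖ ^ 2 := by rw [abs_of_nonneg (by positivity)]; ring


set_option maxHeartbeats 1000000 in
lemma main_ineq {E : Type*} [NormedAddCommGroup E] [InnerProductSpace ℝ E] {g : E → ℝ}
    (LH LC c μ₁ μ₂ m lam : ℝ)
    (hLH : 0 < LH) (hLC : 0 ≤ LC)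
    (hμ₁0 : 0 < μ₁) (hμ₁1 : μ₁ ≤ 1) (hμ₂0 : 0 < μ₂) (hμ₂1 : μ₂ ≤ μ₁)
    (hm0 : 0 ≤ m) (hm1 : m ≤ 1) (hc0 : 0 < c)
    (hη : 0 < 2*c - μ₂*(c + 1 + μ₁ + 2*LH))
    (A H : E →L[ℝ] E) (xk xhat xstar b1 b2 εk : E)
    (hsymm : ∀ v w, ⟪A v, w⟫ = ⟪A w, v⟫)
    (hlam1 : ∀ v, lam * ‖v‖^2 ≤ ⟪v, A v⟫) (hlamLH : -LH ≤ lam)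
    (hHapp : ∀ v, H v = A v + (max (-lam) 0 + c + μ₁ * m) • v)
    (hR : ‖b2 - b1 - A (xstar - xk)‖ ≤ LC / 2 * ‖xstar - xk‖ ^ 2)
    (hsub1 : g xstar ≤ g xhat + ⟪b2, xhat - xstar⟫)
    (hsub2 : g xhat ≤ g xstar + (⟪b1, xstar - xhat⟫
      + (1/2)*(⟪xstar - xhat, H (xhat - xk)⟫ + ⟪xhat - xk, H (xstar - xhat)⟫)
      + ⟪εk, xstar - xhat⟫))
    (herr : ‖εk‖ ≤ μ₂/2 * m * ‖xhat - xk‖) :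
    (2*c - μ₂*(c + 1 + μ₁ + 2*LH)) * ‖xhat - xk‖
      ≤ LC * ‖xstar - xk‖^2 + 2*(LH + 2*c + μ₁) * ‖xstar - xk‖ := by
  set s := max (-lam) 0 + c + μ₁ * m with hsdef
  set d := xhat - xk with hddef
  set e := xstar - xk with hedef
  set u := xhat - xstar with hudef
  set R := b2 - b1 - A e with hRdef
  clear_value s d e u R
  have hdue : d = u + e := by rw [hddef, hudef, hedef]; abel
  have hs0 : 0 ≤ s := by
    rw [hsdef]
    have := le_max_right (-lam) 0
    linarith [mul_nonneg hμ₁0.le hm0]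
  have hsLH : s ≤ LH + c + μ₁ * m := by
    rw [hsdef]
    have h1 : max (-lam) 0 ≤ LH := max_le (by linarith) hLH.le
    linarith
  have hcomb : (1/2) * (⟪u, H d⟫ + ⟪d, H u⟫) + ⟪εk, u⟫ ≤ ⟪b2, u⟫ - ⟪b1, u⟫ := by
    have h1 := hsub1
    have h2 := hsub2
    have hws : xstar - xhat = -u := by rw [hudef]; abel
    rw [hws] at h2
    have n1 : ⟪b1, -u⟫ = -⟪b1, u⟫ := inner_neg_right _ _
    have n2 : ⟪εk, -u⟫ = -⟪εk, u⟫ := inner_neg_right _ _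
    have n3 : ⟪-u, H d⟫ = -⟪u, H d⟫ := inner_neg_left _ _
    have n4 : ⟪d, H (-u)⟫ = -⟪d, H u⟫ := by rw [map_neg, inner_neg_right]
    rw [n1, n2, n3, n4] at h2
    linarith
  have ex1 : ⟪u, H d⟫ = ⟪u, H u⟫ + ⟪u, H e⟫ := by rw [hdue, map_add, inner_add_right]
  have ex2 : ⟪d, H u⟫ = ⟪u, H u⟫ + ⟪e, H u⟫ := by rw [hdue, inner_add_left]
  have ex3 : ⟪u, H e⟫ = ⟪u, A e⟫ + s * ⟪u, e⟫ := by
    rw [hHapp e, inner_add_right, real_inner_smul_right]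
  have h41 : ⟪e, A u⟫ = ⟪u, A e⟫ :=
    (real_inner_comm _ _).trans ((hsymm u e).trans (real_inner_comm _ _))
  have h42 : ⟪e, u⟫ = ⟪u, e⟫ := real_inner_comm _ _
  have ex4 : ⟪e, H u⟫ = ⟪u, A e⟫ + s * ⟪u, e⟫ := by
    rw [hHapp u, inner_add_right, real_inner_smul_right, h41, h42]
  have ex5 : ⟪b2, u⟫ - ⟪b1, u⟫ = ⟪R, u⟫ + ⟪u, A e⟫ := by
    have h1 : b2 = R + A e + b1 := by rw [hRdef]; abel
    rw [h1, inner_add_left, inner_add_left, real_inner_comm (A e) u]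
    ring
  have hiq : ⟪u, H u⟫ ≤ ⟪R, u⟫ - s * ⟪u, e⟫ - ⟪εk, u⟫ := by
    rw [ex1, ex3] at hcomb
    rw [ex2, ex4] at hcomb
    rw [ex5] at hcomb
    linarith
  have hub : ⟪u, H u⟫ ≤ (LC/2 * ‖e‖^2) * ‖u‖ + s * (‖e‖ * ‖u‖) + ‖εk‖ * ‖u‖ := by
    have c1 : ⟪R, u⟫ ≤ ‖R‖ * ‖u‖ := real_inner_le_norm _ _
    have c1' : ‖R‖ * ‖u‖ ≤ (LC/2 * ‖e‖^2) * ‖u‖ :=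
      mul_le_mul_of_nonneg_right hR (norm_nonneg u)
    have c2 : -⟪u, e⟫ ≤ ‖u‖ * ‖e‖ := by
      have := abs_real_inner_le_norm u e
      have := neg_abs_le (⟪u, e⟫)
      linarith
    have c2' : s * (-⟪u, e⟫) ≤ s * (‖u‖ * ‖e‖) := mul_le_mul_of_nonneg_left c2 hs0
    have c3 : -⟪εk, u⟫ ≤ ‖εk‖ * ‖u‖ := by
      have := abs_real_inner_le_norm εk u
      have := neg_abs_le (⟪εk, u⟫)
      linarith
    linarith [hiq, c1, c1', c2', c3]
  have hlow : (c + μ₁ * m) * ‖u‖^2 ≤ ⟪u, H u⟫ := by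
    have h1 : ⟪u, H u⟫ = ⟪u, A u⟫ + s * ‖u‖^2 := by
      rw [hHapp u, inner_add_right, real_inner_smul_right, real_inner_self_eq_norm_sq]
    have h2 := hlam1 u
    have h3 : 0 ≤ lam + max (-lam) 0 := by
      have := le_max_left (-lam) 0
      linarith
    rw [h1, hsdef]
    linarith [mul_nonneg h3 (sq_nonneg ‖u‖), h2]
  have hKey2 : (c + μ₁ * m) * ‖u‖ ≤ LC/2 * ‖e‖^2 + s * ‖e‖ + ‖εk‖ := by
    rcases eq_or_lt_of_le (norm_nonneg u) with h0 | h0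
    · rw [← h0, mul_zero]
      have hb1 : (0:ℝ) ≤ LC/2 * ‖e‖^2 := by positivity
      have hb2 : (0:ℝ) ≤ s * ‖e‖ := mul_nonneg hs0 (norm_nonneg e)
      linarith [norm_nonneg εk]
    · have h1 : (c + μ₁ * m) * ‖u‖ * ‖u‖ ≤ (LC/2 * ‖e‖^2 + s * ‖e‖ + ‖εk‖) * ‖u‖ := by
        linarith [hlow, hub]
      exact le_of_mul_le_mul_right h1 h0
  have hDur : ‖d‖ ≤ ‖u‖ + ‖e‖ := by rw [hdue]; exact norm_add_le u e
  have hcm : 0 ≤ c + μ₁ * m := add_nonneg hc0.le (mul_nonneg hμ₁0.le hm0)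
  have hP : (c + μ₁ * m - μ₂/2 * m) * ‖d‖ ≤ LC/2 * ‖e‖^2 + (LH + 2*c + 2*μ₁*m) * ‖e‖ := by
    have h1 : (c + μ₁ * m) * ‖d‖ ≤ (c + μ₁ * m) * (‖u‖ + ‖e‖) :=
      mul_le_mul_of_nonneg_left hDur hcm
    have h2 : s * ‖e‖ ≤ (LH + c + μ₁ * m) * ‖e‖ :=
      mul_le_mul_of_nonneg_right hsLH (norm_nonneg e)
    linarith [hKey2, herr, h1, h2]
  have hQη : 2*c - μ₂*(c + 1 + μ₁ + 2*LH) ≤ LH + 2*c + μ₁ := by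
    linarith [mul_nonneg hμ₂0.le (show (0:ℝ) ≤ c + 1 + μ₁ + 2*LH by linarith)]
  have hκpos : 0 < c + μ₁ * m - μ₂/2 * m := by
    linarith [mul_nonneg (sub_nonneg.2 hμ₂1) hm0, mul_nonneg hμ₂0.le hm0]
  have h2κη : 2*c - μ₂*(c + 1 + μ₁ + 2*LH) ≤ 2 * (c + μ₁ * m - μ₂/2 * m) := by
    linarith [mul_nonneg (sub_nonneg.2 hμ₂1) hm0, mul_nonneg hμ₂0.le hm0,
      mul_nonneg hμ₂0.le (show (0:ℝ) ≤ c + 1 + μ₁ + 2*LH by linarith)]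
  have hcoef : (2*c - μ₂*(c + 1 + μ₁ + 2*LH)) * (LH + 2*c + 2*μ₁*m)
      ≤ 2 * (c + μ₁*m - μ₂/2*m) * (LH + 2*c + μ₁) := by
    linarith [mul_nonneg (mul_nonneg hμ₁0.le hm0) (sub_nonneg.2 hQη),
      mul_nonneg (mul_nonneg hμ₁0.le hη.le) (sub_nonneg.2 hm1),
      mul_nonneg (mul_nonneg (sub_nonneg.2 hμ₂1) hm0) (show (0:ℝ) ≤ LH + 2*c + μ₁ by linarith),
      mul_nonneg (mul_nonneg hμ₂0.le (show (0:ℝ) ≤ c + 1 + μ₁ + 2*LH by linarith))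
        (show (0:ℝ) ≤ LH + 2*c + μ₁ by linarith)]
  have hfin : (c + μ₁*m - μ₂/2*m) * ((2*c - μ₂*(c + 1 + μ₁ + 2*LH)) * ‖d‖)
      ≤ (c + μ₁*m - μ₂/2*m) * (LC * ‖e‖^2 + 2*(LH + 2*c + μ₁) * ‖e‖) := by
    linarith [mul_le_mul_of_nonneg_left hP hη.le,
      mul_nonneg (sub_nonneg.2 h2κη)
        (mul_nonneg (div_nonneg hLC (by norm_num : (0:ℝ) ≤ 2)) (sq_nonneg ‖e‖)),
      mul_le_mul_of_nonneg_right hcoef (norm_nonneg e)]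
  exact le_of_mul_le_mul_left hfin hκpos

set_option maxHeartbeats 1000000 in
/-- Bound on the inexact step length `‖x̂_k − x_k‖` in terms of `dist(x_k, S*)`. -/
theorem stmt12 {n : ℕ}
    (f g : EuclideanSpace ℝ (Fin n) → ℝ)
    (hf : ContDiff ℝ 2 f)
    (LH : ℝ) (hLH : 0 < LH)
    (hlip : ∀ u v, ‖gradient f u - gradient f v‖ ≤ LH * ‖u - v‖)
    (hg : ConvexOn ℝ Set.univ g) (hgc : Continuous g)
    (proxg : EuclideanSpace ℝ (Fin n) → EuclideanSpace ℝ (Fin n))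
    (hprox : ∀ y, IsMinOn (fun u => g u + (1 / 2) * ‖u - y‖ ^ 2) Set.univ (proxg y))
    (hproxU : ∀ y u, IsMinOn (fun u => g u + (1 / 2) * ‖u - y‖ ^ 2) Set.univ u → u = proxg y)
    (G : EuclideanSpace ℝ (Fin n) → EuclideanSpace ℝ (Fin n))
    (hG : ∀ y, G y = y - proxg (y - gradient f y))
    (Hess : EuclideanSpace ℝ (Fin n) → (EuclideanSpace ℝ (Fin n) →L[ℝ] EuclideanSpace ℝ (Fin n)))
    (hHess : ∀ y, HasFDerivAt (gradient f) (Hess y) y)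
    (xbar : EuclideanSpace ℝ (Fin n)) (hxbar : G xbar = 0)
    (ε₀ LC : ℝ) (hε₀ : 0 < ε₀) (hLC : 0 ≤ LC)
    (hLipC : ∀ u ∈ Metric.ball xbar ε₀, ∀ v ∈ Metric.ball xbar ε₀,
        ‖Hess u - Hess v‖ ≤ LC * ‖u - v‖)
    (xk : EuclideanSpace ℝ (Fin n)) (hxk : xk ∈ Metric.ball xbar (ε₀ / 2))
    (c μ₁ μ₂ δ : ℝ)
    (hμ₁ : μ₁ ∈ Set.Ioc (0 : ℝ) 1) (hμ₂ : μ₂ ∈ Set.Ioc (0 : ℝ) μ₁)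
    (hδ : δ ∈ Set.Icc (0 : ℝ) 1)
    (hc : c > μ₂ * (1 + 2 * LH + μ₁) / (2 - μ₂))
    (lam : ℝ) (hlam : IsGreatest {t : ℝ | ∀ v, t * ‖v‖ ^ 2 ≤ ⟪v, Hess xk v⟫} lam)
    (H : EuclideanSpace ℝ (Fin n) →L[ℝ] EuclideanSpace ℝ (Fin n))
    (hH : H = Hess xk + (max (-lam) 0 + c + μ₁ * min 1 (‖G xk‖ ^ δ))
        • ContinuousLinearMap.id ℝ (EuclideanSpace ℝ (Fin n)))
    (εk xhat : EuclideanSpace ℝ (Fin n))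
    (hmin : IsMinOn (fun y => f xk + ⟪gradient f xk, y - xk⟫ + g y
        + (1 / 2) * ⟪y - xk, H (y - xk)⟫ + ⟪εk, y - xk⟫) Set.univ xhat)
    (herr : ‖εk‖ ≤ (μ₂ / 2) * min 1 (‖G xk‖ ^ δ) * ‖xhat - xk‖) :
    0 < 2 * c - μ₂ * (c + 1 + μ₁ + 2 * LH) ∧
    ‖xhat - xk‖ ≤ (LC / (2 * c - μ₂ * (c + 1 + μ₁ + 2 * LH)))
          * Metric.infDist xk {y : EuclideanSpace ℝ (Fin n) | G y = 0} ^ 2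
      + (2 * (LH + 2 * c + μ₁) / (2 * c - μ₂ * (c + 1 + μ₁ + 2 * LH)))
          * Metric.infDist xk {y : EuclideanSpace ℝ (Fin n) | G y = 0} := by
  obtain ⟨hμ₁0, hμ₁1⟩ := hμ₁
  obtain ⟨hμ₂0, hμ₂1⟩ := hμ₂
  set m := min 1 (‖G xk‖ ^ δ) with hmdef
  have hm0 : 0 ≤ m := le_min one_pos.le (Real.rpow_nonneg (norm_nonneg _) δ)
  have hm1 : m ≤ 1 := min_le_left _ _
  have h2μ₂ : 0 < 2 - μ₂ := by linarith
  have hc0 : 0 < c := lt_trans (by positivity) hc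
  have hη : 0 < 2 * c - μ₂ * (c + 1 + μ₁ + 2 * LH) := by
    rw [gt_iff_lt, div_lt_iff₀ h2μ₂] at hc
    nlinarith
  refine ⟨hη, ?_⟩
  -- basic facts about the Hessian
  have hsymm := hess_symm f hf Hess hHess xk
  have hlipW : LipschitzWith (Real.toNNReal LH) (gradient f) := by
    apply LipschitzWith.of_dist_le_mul
    intro x y
    rw [dist_eq_norm, dist_eq_norm, Real.coe_toNNReal LH hLH.le]
    exact hlip x y
  have hopn : ‖Hess xk‖ ≤ LH := by
    have := (hHess xk).le_of_lipschitz hlipW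
    rwa [Real.coe_toNNReal LH hLH.le] at this
  have hHn : ∀ v, ‖Hess xk v‖ ≤ LH * ‖v‖ := fun v =>
    le_trans ((Hess xk).le_opNorm v) (mul_le_mul_of_nonneg_right hopn (norm_nonneg v))
  have hlamLH : -LH ≤ lam := by
    apply hlam.2
    intro v
    have h1 := hHn v
    have h2 := abs_real_inner_le_norm v (Hess xk v)
    have h3 := neg_abs_le (⟪v, Hess xk v⟫)
    nlinarith [norm_nonneg v, norm_nonneg (Hess xk v)]
  have hHapp : ∀ v, H v = Hess xk v + (max (-lam) 0 + c + μ₁ * m) • v := by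
    intro v
    rw [hH]
    simp [ContinuousLinearMap.add_apply, ContinuousLinearMap.smul_apply]
  have hmin' : ∀ u, f xk + ⟪gradient f xk, xhat - xk⟫ + g xhat
      + (1/2) * ⟪xhat - xk, H (xhat - xk)⟫ + ⟪εk, xhat - xk⟫
      ≤ f xk + ⟪gradient f xk, u - xk⟫ + g u + (1/2) * ⟪u - xk, H (u - xk)⟫
        + ⟪εk, u - xk⟫ := fun u => isMinOn_iff.mp hmin u (Set.mem_univ u)
  have herr' : ‖εk‖ ≤ μ₂/2 * m * ‖xhat - xk‖ := herr
  -- key estimate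
  have key : ∀ xstar : EuclideanSpace ℝ (Fin n), G xstar = 0 → ‖xstar - xk‖ < ε₀ / 2 →
      (2*c - μ₂*(c + 1 + μ₁ + 2*LH)) * ‖xhat - xk‖
        ≤ LC * ‖xstar - xk‖^2 + 2*(LH + 2*c + μ₁) * ‖xstar - xk‖ := by
    intro xstar hGs hcl
    have hpeq : proxg (xstar - gradient f xstar) = xstar := by
      have h1 := hG xstar
      rw [hGs] at h1
      exact (sub_eq_zero.mp h1.symm).symm
    have hm' : ∀ u, g xstar + (1/2) * ‖xstar - (xstar - gradient f xstar)‖^2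
        ≤ g u + (1/2) * ‖u - (xstar - gradient f xstar)‖^2 := by
      intro u
      have h1 := isMinOn_iff.mp (hprox (xstar - gradient f xstar)) u (Set.mem_univ u)
      rw [hpeq] at h1
      exact h1
    have hsub1 := stationary_subgrad hg xstar (gradient f xstar) hm' xhat
    have hsub2 := model_subgrad hg H (f xk) (gradient f xk) εk xk xhat xstar hmin'
    have hR := taylor_bound f hf Hess hHess xbar ε₀ LC hLC hLipC xk
      (Metric.mem_ball.mp hxk) xstar hcl
    exact main_ineq LH LC c μ₁ μ₂ m lam hLH hLC hμ₁0 hμ₁1 hμ₂0 hμ₂1 hm0 hm1 hc0 hη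
      (Hess xk) H xk xhat xstar (gradient f xk) (gradient f xstar) εk
      hsymm hlam.1 hlamLH hHapp hR hsub1 hsub2 herr'
  -- limiting argument
  have hS : Set.Nonempty {y : EuclideanSpace ℝ (Fin n) | G y = 0} := ⟨xbar, hxbar⟩
  set r₀ := Metric.infDist xk {y : EuclideanSpace ℝ (Fin n) | G y = 0} with hr₀def
  have hSd : r₀ ≤ dist xk xbar := Metric.infDist_le_dist_of_mem hxbar
  have hr₀0 : 0 ≤ r₀ := Metric.infDist_nonneg
  have hxkb : dist xk xbar < ε₀ / 2 := Metric.mem_ball.mp hxk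
  set β := ε₀/2 - dist xk xbar with hβdef
  have hβ : 0 < β := by rw [hβdef]; linarith
  set η := 2 * c - μ₂ * (c + 1 + μ₁ + 2 * LH) with hηdef
  set a := LC / η with hadef
  set b := 2 * (LH + 2*c + μ₁) / η with hbdef
  have ha : 0 ≤ a := div_nonneg hLC hη.le
  have hb : 0 ≤ b := div_nonneg (by linarith) hη.le
  have hmain : ∀ ε ∈ Set.Ioo (0:ℝ) β,
      ‖xhat - xk‖ - (a * r₀^2 + b * r₀) ≤ ε * (a * (2*r₀ + β) + b) := by
    intro ε hε
    obtain ⟨xs, hxsS, hxsd⟩ := (Metric.infDist_lt_iff hS).mp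
      (show r₀ < r₀ + ε from lt_add_of_pos_right r₀ hε.1)
    have hxsr : ‖xs - xk‖ < r₀ + ε := by
      have h1 : ‖xs - xk‖ = dist xk xs := by rw [← dist_eq_norm, dist_comm]
      rw [h1]; exact hxsd
    have hcl : ‖xs - xk‖ < ε₀/2 := by
      have h2 := hε.2
      rw [hβdef] at h2
      linarith
    have hk := key xs hxsS hcl
    have hd2 : ‖xhat - xk‖ ≤ a * ‖xs - xk‖^2 + b * ‖xs - xk‖ := by
      have heq : a * ‖xs - xk‖^2 + b * ‖xs - xk‖
          = (LC * ‖xs - xk‖^2 + 2*(LH + 2*c + μ₁) * ‖xs - xk‖) / η := by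
        rw [hadef, hbdef]; field_simp
      rw [heq, le_div_iff₀ hη]
      nlinarith [hk]
    have hρ0 : (0:ℝ) ≤ ‖xs - xk‖ := norm_nonneg _
    nlinarith [hd2, mul_le_mul_of_nonneg_left (pow_le_pow_left₀ hρ0 hxsr.le 2) ha,
      mul_le_mul_of_nonneg_left hxsr.le hb,
      mul_nonneg (mul_nonneg ha hε.1.le) (sub_nonneg.2 hε.2.le)]
  have hlast := small_eps hβ hmain
  linarith
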